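/- Let k > l ≥ 0 be integers and suppose u_k, u_l ∈ C²([0,R_s];ℝ) satisfy u_k'' + ((n+2k−1)/r)u_k' = q u_k and u_l'' + ((n+2l−1)/r)u_l' = q u_l on (0,R_s), with u_k'(0) = u_l'(0) = 0 and u_k(R_s) = u_l(R_s) = 1. Then u_k(r) ≥ u_l(r) for all r ∈ [0,R_s]. (Lemma 3.3, assertion (3): u_k is monotone non-decreasing in k.) -/

import Mathlib

open Set Real

private lemma pow_coef_eq (m : ℕ) (hm : 1 ≤ m) (x : ℝ) (hx : x ≠ 0) :
    (m : ℝ) * x ^ (m - 1) = x ^ m * ((m : ℝ) / x) := by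
  have hxm : x ^ m = x ^ (m - 1) * x := by
    rw [← pow_succ, Nat.sub_add_cancel hm]
  rw [hxm]
  field_simp

/-- Key maximum-principle lemma: a supersolution with Neumann condition at `0`
and nonnegative value at `Rs` is nonnegative. -/
private lemma aux_nonneg (Rs : ℝ) (hRs : 0 < Rs) (m : ℕ) (hm : 1 ≤ m)
    (q : ℝ → ℝ) (hq : ∀ r ∈ Icc (0:ℝ) Rs, 0 < q r)
    (w w' w'' : ℝ → ℝ)
    (hw' : ∀ r ∈ Icc (0:ℝ) Rs, HasDerivAt w (w' r) r)
    (hw'' : ∀ r ∈ Icc (0:ℝ) Rs, HasDerivAt w' (w'' r) r)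
    (hode : ∀ r ∈ Ioo (0:ℝ) Rs, w'' r + ((m:ℝ) / r) * w' r ≤ q r * w r)
    (hw'0 : w' 0 = 0) (hwRs : 0 ≤ w Rs) :
    ∀ r ∈ Icc (0:ℝ) Rs, 0 ≤ w r := by
  by_contra hcon
  push_neg at hcon
  obtain ⟨a, ha, hwa⟩ := hcon
  have hwc : ContinuousOn w (Icc 0 Rs) := fun r hr =>
    (hw' r hr).continuousAt.continuousWithinAt
  have hw'c : ContinuousOn w' (Icc 0 Rs) := fun r hr =>
    (hw'' r hr).continuousAt.continuousWithinAt
  obtain ⟨r0, hr0mem, hr0min⟩ :=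
    isCompact_Icc.exists_isMinOn (nonempty_Icc.2 hRs.le) hwc
  have hwr0 : w r0 < 0 := lt_of_le_of_lt (hr0min ha) hwa
  have hRsmem : Rs ∈ Icc (0:ℝ) Rs := ⟨hRs.le, le_rfl⟩
  have hr0Rs : r0 < Rs := by
    rcases lt_or_eq_of_le hr0mem.2 with h | h
    · exact h
    · exfalso; rw [h] at hwr0; linarith
  have hw'r0 : w' r0 = 0 := by
    rcases eq_or_lt_of_le hr0mem.1 with h0 | h0
    · rw [← h0]; exact hw'0
    · have hlocal : IsLocalMin w r0 := hr0min.isLocalMin (Icc_mem_nhds h0 hr0Rs)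
      exact hlocal.hasDerivAt_eq_zero (hw' r0 hr0mem)
  -- first zero after r0
  have hsub0 : Icc r0 Rs ⊆ Icc (0:ℝ) Rs := Icc_subset_Icc hr0mem.1 le_rfl
  obtain ⟨z, hz, hwz⟩ := intermediate_value_Icc hr0Rs.le (hwc.mono hsub0)
    (show (0:ℝ) ∈ Icc (w r0) (w Rs) from ⟨hwr0.le, hwRs⟩)
  set T : Set ℝ := {r | r ∈ Icc r0 Rs ∧ w r = 0} with hT
  have hTne : T.Nonempty := ⟨z, hz, hwz⟩
  have hTbdd : BddBelow T := ⟨r0, fun x hx => hx.1.1⟩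
  have hTclosed : IsClosed T := by
    have : T = Icc r0 Rs ∩ w ⁻¹' {0} := by
      ext x; simp [hT, Set.mem_preimage]
    rw [this]
    exact (hwc.mono hsub0).preimage_isClosed_of_isClosed isClosed_Icc isClosed_singleton
  set β := sInf T with hβ
  have hβT : β ∈ T := hTclosed.csInf_mem hTne hTbdd
  have hr0β : r0 < β := by
    rcases lt_or_eq_of_le (le_csInf hTne fun x hx => hx.1.1) with h | h
    · exact h
    · exfalso
      have : w r0 = 0 := by rw [h]; exact hβT.2
      linarith
  have hβRs : β ≤ Rs := hβT.1.2
  -- w < 0 on [r0, β)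
  have hneg : ∀ r ∈ Ico r0 β, w r < 0 := by
    intro r hr
    by_contra hge
    push_neg at hge
    have hrRs : r ≤ Rs := le_trans hr.2.le hβRs
    obtain ⟨z', hz', hwz'⟩ := intermediate_value_Icc hr.1
      (hwc.mono (Icc_subset_Icc hr0mem.1 hrRs))
      (show (0:ℝ) ∈ Icc (w r0) (w r) from ⟨hwr0.le, hge⟩)
    have hβz' : β ≤ z' := csInf_le hTbdd ⟨⟨hz'.1, le_trans hz'.2 hrRs⟩, hwz'⟩
    have : z' ≤ r := hz'.2
    linarith [hr.2]
  -- g := r^m * w' is strictly decreasing on [r0, β]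
  have hsub : Icc r0 β ⊆ Icc (0:ℝ) Rs := Icc_subset_Icc hr0mem.1 hβRs
  set g : ℝ → ℝ := fun r => r ^ m * w' r with hg
  have hgderiv : ∀ x ∈ Ioo r0 β,
      HasDerivAt g ((m:ℝ) * x ^ (m-1) * w' x + x ^ m * w'' x) x := by
    intro x hx
    exact (hasDerivAt_pow m x).mul (hw'' x (hsub (Ioo_subset_Icc_self hx)))
  have hgderiv_neg : ∀ x ∈ Ioo r0 β,
      (m:ℝ) * x ^ (m-1) * w' x + x ^ m * w'' x < 0 := by
    intro x hx
    have hx0 : 0 < x := lt_of_le_of_lt hr0mem.1 hx.1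
    have hxRs : x < Rs := lt_of_lt_of_le hx.2 hβRs
    have hxm : 0 < x ^ m := pow_pos hx0 m
    have hq' := hq x ⟨hx0.le, hxRs.le⟩
    have hwx := hneg x ⟨hx.1.le, hx.2⟩
    have hode' := hode x ⟨hx0, hxRs⟩
    have hcoef := pow_coef_eq m hm x hx0.ne'
    have hkey : (m:ℝ) * x ^ (m-1) * w' x + x ^ m * w'' x
        = x ^ m * (w'' x + ((m:ℝ)/x) * w' x) := by
      rw [hcoef]; ring
    rw [hkey]
    have h1 : x ^ m * (w'' x + ((m:ℝ)/x) * w' x) ≤ x ^ m * (q x * w x) :=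
      mul_le_mul_of_nonneg_left hode' hxm.le
    have h2 : q x * w x < 0 := mul_neg_of_pos_of_neg hq' hwx
    nlinarith
  have hgcont : ContinuousOn g (Icc r0 β) :=
    (continuous_pow m).continuousOn.mul (hw'c.mono hsub)
  have hganti : StrictAntiOn g (Icc r0 β) := by
    apply strictAntiOn_of_deriv_neg (convex_Icc _ _) hgcont
    intro x hx
    rw [interior_Icc] at hx
    rw [(hgderiv x hx).deriv]
    exact hgderiv_neg x hx
  have hw'neg : ∀ r ∈ Ioc r0 β, w' r < 0 := by
    intro r hr
    have hgr : g r < g r0 :=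
      hganti (left_mem_Icc.2 hr0β.le) ⟨hr.1.le, hr.2⟩ hr.1
    have hgr0 : g r0 = 0 := by simp [hg, hw'r0]
    have hrpos : 0 < r := lt_of_le_of_lt hr0mem.1 hr.1
    have hrm : 0 < r ^ m := pow_pos hrpos m
    rw [hgr0] at hgr
    have hgr' : r ^ m * w' r < 0 := hgr
    nlinarith [hgr', hrm]
  -- hence w strictly decreasing on [r0, β], contradiction with w β = 0 > w r0
  have hwanti : StrictAntiOn w (Icc r0 β) := by
    apply strictAntiOn_of_deriv_neg (convex_Icc _ _) (hwc.mono hsub)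
    intro x hx
    rw [interior_Icc] at hx
    rw [(hw' x (hsub (Ioo_subset_Icc_self hx))).deriv]
    exact hw'neg x ⟨hx.1, hx.2.le⟩
  have : w β < w r0 := hwanti (left_mem_Icc.2 hr0β.le) (right_mem_Icc.2 hr0β.le) hr0β
  rw [hβT.2] at this
  linarith

/-- Lemma 3.3, assertion (3): `u_k` is monotone non-decreasing in `k`. -/
theorem stmt_3
    (n k l : ℕ) (hn : 2 ≤ n) (hkl : l < k) (Rs : ℝ) (hRs : 0 < Rs)
    (q : ℝ → ℝ) (hqcont : ContinuousOn q (Icc 0 Rs))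
    (hq : ∀ r ∈ Icc (0:ℝ) Rs, 0 < q r)
    (uk uk' uk'' ul ul' ul'' : ℝ → ℝ)
    (huk' : ∀ r ∈ Icc (0:ℝ) Rs, HasDerivAt uk (uk' r) r)
    (huk'' : ∀ r ∈ Icc (0:ℝ) Rs, HasDerivAt uk' (uk'' r) r)
    (huk''cont : ContinuousOn uk'' (Icc 0 Rs))
    (hul' : ∀ r ∈ Icc (0:ℝ) Rs, HasDerivAt ul (ul' r) r)
    (hul'' : ∀ r ∈ Icc (0:ℝ) Rs, HasDerivAt ul' (ul'' r) r)
    (hul''cont : ContinuousOn ul'' (Icc 0 Rs))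
    (hodek : ∀ r ∈ Ioo (0:ℝ) Rs, uk'' r + ((n + 2 * k - 1 : ℝ) / r) * uk' r = q r * uk r)
    (hodel : ∀ r ∈ Ioo (0:ℝ) Rs, ul'' r + ((n + 2 * l - 1 : ℝ) / r) * ul' r = q r * ul r)
    (huk'0 : uk' 0 = 0) (hul'0 : ul' 0 = 0)
    (hukRs : uk Rs = 1) (hulRs : ul Rs = 1) :
    ∀ r ∈ Icc (0:ℝ) Rs, ul r ≤ uk r := by
  set mk : ℕ := n + 2 * k - 1 with hmk
  set ml : ℕ := n + 2 * l - 1 with hml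
  have hmk1 : 1 ≤ mk := by omega
  have hml1 : 1 ≤ ml := by omega
  have hmkcast : (mk : ℝ) = (n : ℝ) + 2 * k - 1 := by
    have h1 : (1:ℕ) ≤ n + 2 * k := by omega
    rw [hmk]; push_cast [Nat.cast_sub h1]; ring
  have hmlcast : (ml : ℝ) = (n : ℝ) + 2 * l - 1 := by
    have h1 : (1:ℕ) ≤ n + 2 * l := by omega
    rw [hml]; push_cast [Nat.cast_sub h1]; ring
  -- Step 1: ul ≥ 0
  have hulnonneg : ∀ r ∈ Icc (0:ℝ) Rs, 0 ≤ ul r := by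
    apply aux_nonneg Rs hRs ml hml1 q hq ul ul' ul'' hul' hul''
    · intro r hr
      rw [hmlcast]
      exact le_of_eq (hodel r hr)
    · exact hul'0
    · rw [hulRs]; norm_num
  -- Step 1.5 : ul' ≥ 0 on (0, Rs)
  have hul'nonneg : ∀ r ∈ Ioo (0:ℝ) Rs, 0 ≤ ul' r := by
    set g : ℝ → ℝ := fun r => r ^ ml * ul' r with hg
    have hgderiv : ∀ x ∈ Ioo (0:ℝ) Rs,
        HasDerivAt g ((ml:ℝ) * x ^ (ml-1) * ul' x + x ^ ml * ul'' x) x := by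
      intro x hx
      exact (hasDerivAt_pow ml x).mul (hul'' x (Ioo_subset_Icc_self hx))
    have hgmono : MonotoneOn g (Icc 0 Rs) := by
      apply monotoneOn_of_deriv_nonneg (convex_Icc _ _)
      · exact (continuous_pow ml).continuousOn.mul
          (fun r hr => (hul'' r hr).continuousAt.continuousWithinAt)
      · intro x hx
        rw [interior_Icc] at hx
        exact (hgderiv x hx).differentiableAt.differentiableWithinAt
      · intro x hx
        rw [interior_Icc] at hx
        rw [(hgderiv x hx).deriv]
        have hx0 : 0 < x := hx.1
        have hcoef := pow_coef_eq ml hml1 x hx0.ne'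
        have hkey : (ml:ℝ) * x ^ (ml-1) * ul' x + x ^ ml * ul'' x
            = x ^ ml * (ul'' x + ((ml:ℝ)/x) * ul' x) := by
          rw [hcoef]; ring
        rw [hkey]
        have hode' := hodel x hx
        rw [← hmlcast] at hode'
        rw [hode']
        have := hq x ⟨hx0.le, hx.2.le⟩
        have := hulnonneg x ⟨hx0.le, hx.2.le⟩
        positivity
    intro r hr
    have h0 : g 0 = 0 := by
      simp [hg, zero_pow (by omega : ml ≠ 0)]
    have : g 0 ≤ g r := hgmono ⟨le_rfl, hRs.le⟩ ⟨hr.1.le, hr.2.le⟩ hr.1.le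
    rw [h0] at this
    have this' : 0 ≤ r ^ ml * ul' r := this
    have hrm : 0 < r ^ ml := pow_pos hr.1 ml
    nlinarith [this', hrm]
  -- Step 2: w := uk - ul is nonnegative
  have hmain : ∀ r ∈ Icc (0:ℝ) Rs, 0 ≤ uk r - ul r := by
    apply aux_nonneg Rs hRs mk hmk1 q hq (fun r => uk r - ul r)
        (fun r => uk' r - ul' r) (fun r => uk'' r - ul'' r)
    · intro r hr; exact (huk' r hr).sub (hul' r hr)
    · intro r hr; exact (huk'' r hr).sub (hul'' r hr)
    · intro r hr
      have ek := hodek r hr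
      have el := hodel r hr
      have hr0 : (0:ℝ) < r := hr.1
      have hkl' : (l:ℝ) ≤ (k:ℝ) := by exact_mod_cast hkl.le
      have h1 : 0 ≤ (((n:ℝ) + 2*k - 1) - ((n:ℝ) + 2*l - 1)) / r * ul' r :=
        mul_nonneg (div_nonneg (by linarith) hr0.le) (hul'nonneg r hr)
      rw [hmkcast]
      have expand : (uk'' r - ul'' r) + (((n:ℝ) + 2*k - 1) / r) * (uk' r - ul' r)
          = (uk'' r + (((n:ℝ) + 2*k - 1) / r) * uk' r)
            - (ul'' r + (((n:ℝ) + 2*l - 1) / r) * ul' r)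
            - (((n:ℝ) + 2*k - 1) - ((n:ℝ) + 2*l - 1)) / r * ul' r := by
        ring
      rw [expand, ek, el]
      have hq' : q r * (uk r - ul r) = q r * uk r - q r * ul r := by ring
      linarith
    · simp [huk'0, hul'0]
    · rw [hukRs, hulRs]; norm_num
  intro r hr
  linarith [hmain r hr]
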